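/- Let A, B ∈ B(H). Then for all real p ≥ 1, ω(A*B)^p ≤ (1/2)·‖A‖^p·‖B‖^p + (1/2)·ω(BA*)^p. -/

import Mathlib

variable {H : Type*} [NormedAddCommGroup H] [InnerProductSpace ℂ H] [CompleteSpace H]

/-- The absolute value `|T| = (T*T)^(1/2)` of a bounded operator. -/
noncomputable def absOp (T : H →L[ℂ] H) : H →L[ℂ] H := CFC.sqrt (star T * T)

/-- The numerical radius `ω(T) = sup {|⟨Tx, x⟩| : ‖x‖ = 1}`. -/
noncomputable def numRad (T : H →L[ℂ] H) : ℝ :=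
  sSup {r : ℝ | ∃ x : H, ‖x‖ = 1 ∧ r = ‖(inner ℂ (T x) x : ℂ)‖}

local notation "⟪" x ", " y "⟫" => @inner ℂ _ _ x y

lemma numRad_bddAbove (T : H →L[ℂ] H) :
    BddAbove {r : ℝ | ∃ x : H, ‖x‖ = 1 ∧ r = ‖(inner ℂ (T x) x : ℂ)‖} := by
  refine ⟨‖T‖, ?_⟩
  rintro r ⟨x, hx, rfl⟩
  calc ‖(inner ℂ (T x) x : ℂ)‖ ≤ ‖T x‖ * ‖x‖ := norm_inner_le_norm _ _
    _ ≤ ‖T‖ * ‖x‖ * ‖x‖ := by gcongr; exact T.le_opNorm x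
    _ = ‖T‖ := by rw [hx]; ring

lemma numRad_nonneg (T : H →L[ℂ] H) : 0 ≤ numRad T := by
  rcases Set.eq_empty_or_nonempty
      {r : ℝ | ∃ x : H, ‖x‖ = 1 ∧ r = ‖(inner ℂ (T x) x : ℂ)‖} with h | h
  · rw [numRad, h, Real.sSup_empty]
  · obtain ⟨r, x, hx, hr⟩ := h
    refine le_trans (by rw [hr]; exact norm_nonneg _)
      (le_csSup (numRad_bddAbove T) ⟨x, hx, hr⟩)

lemma le_numRad (T : H →L[ℂ] H) (x : H) (hx : ‖x‖ = 1) :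
    ‖(⟪T x, x⟫ : ℂ)‖ ≤ numRad T :=
  le_csSup (numRad_bddAbove T) ⟨x, hx, rfl⟩

lemma numRad_le (T : H →L[ℂ] H) {c : ℝ} (hc : 0 ≤ c)
    (h : ∀ x : H, ‖x‖ = 1 → ‖(⟪T x, x⟫ : ℂ)‖ ≤ c) : numRad T ≤ c := by
  refine Real.sSup_le ?_ hc
  rintro r ⟨x, hx, rfl⟩
  exact h x hx

/-- Richard's inequality. -/
lemma richard (e u v : H) (he : ‖e‖ = 1) :
    ‖2 * ⟪u, e⟫ * ⟪e, v⟫ - ⟪u, v⟫‖ ≤ ‖u‖ * ‖v‖ := by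
  set c : ℂ := ⟪e, u⟫ with hc
  set w : H := (2 * c) • e - u with hw
  have hcon : (starRingEnd ℂ) c = ⟪u, e⟫ := by rw [hc, inner_conj_symm]
  have h1 : (⟪w, v⟫ : ℂ) = 2 * ⟪u, e⟫ * ⟪e, v⟫ - ⟪u, v⟫ := by
    rw [hw, inner_sub_left, inner_smul_left, map_mul, hcon]
    simp only [map_ofNat]
  have h2 : ‖w‖ = ‖u‖ := by
    have hinner : (⟪((2 * c) • e : H), u⟫ : ℂ) = 2 * ((‖c‖ : ℂ)) ^ 2 := by
      rw [inner_smul_left, ← hc, map_mul, map_ofNat, mul_assoc, RCLike.conj_mul]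
      norm_num
    have hre : RCLike.re (⟪((2 * c) • e : H), u⟫ : ℂ) = 2 * ‖c‖ ^ 2 := by
      rw [hinner]
      simp [← Complex.ofReal_pow]
    have hns : ‖((2 * c) • e : H)‖ ^ 2 = 4 * ‖c‖ ^ 2 := by
      rw [norm_smul, he, mul_one, norm_mul]
      norm_num
      ring
    have hsq : ‖w‖ ^ 2 = ‖u‖ ^ 2 := by
      rw [hw, @norm_sub_sq ℂ, hre, hns]
      ring
    have h := abs_eq_abs.mpr (Or.inl (show ‖w‖ ^ 2 - ‖u‖ ^ 2 = 0 by rw [hsq]; ring))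
    nlinarith [norm_nonneg w, norm_nonneg u, hsq]
  calc ‖(2 * ⟪u, e⟫ * ⟪e, v⟫ - ⟪u, v⟫ : ℂ)‖ = ‖(⟪w, v⟫ : ℂ)‖ := by rw [h1]
    _ ≤ ‖w‖ * ‖v‖ := norm_inner_le_norm _ _
    _ = ‖u‖ * ‖v‖ := by rw [h2]

lemma key (A B : H →L[ℂ] H) (x : H) (hx : ‖x‖ = 1) :
    ‖(⟪(star A * B) x, x⟫ : ℂ)‖
      ≤ 1 / 2 * (‖A‖ * ‖B‖) + 1 / 2 * numRad (B * star A) := by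
  have hAdj : (⟪(star A * B) x, x⟫ : ℂ) = ⟪B x, A x⟫ := by
    rw [ContinuousLinearMap.mul_apply, ContinuousLinearMap.star_eq_adjoint,
      ContinuousLinearMap.adjoint_inner_left]
  by_cases hAx : A x = 0
  · rw [hAdj, hAx, inner_zero_right, norm_zero]
    have h1 : (0:ℝ) ≤ ‖A‖ * ‖B‖ := by positivity
    have h2 := numRad_nonneg (B * star A)
    linarith
  · set y : H := (‖A x‖ : ℂ)⁻¹ • A x with hy
    have hAxn : (0:ℝ) < ‖A x‖ := norm_pos_iff.mpr hAx
    have hyn : ‖y‖ = 1 := by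
      rw [hy, norm_smul]
      simp [norm_inv, hAxn.ne']
    have hR := richard x ((ContinuousLinearMap.adjoint A) y)
      ((ContinuousLinearMap.adjoint B) y) hx
    rw [ContinuousLinearMap.adjoint_inner_left, ContinuousLinearMap.adjoint_inner_right] at hR
    have hmid : (⟪(ContinuousLinearMap.adjoint A) y, (ContinuousLinearMap.adjoint B) y⟫ : ℂ)
        = ⟪(B * star A) y, y⟫ := by
      rw [ContinuousLinearMap.mul_apply, ContinuousLinearMap.star_eq_adjoint]
      exact ContinuousLinearMap.adjoint_inner_right B _ _
    rw [hmid] at hR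
    have hprod : (2 * ⟪y, A x⟫ * ⟪B x, y⟫ : ℂ) = 2 * ⟪B x, A x⟫ := by
      rw [hy, inner_smul_left, inner_smul_right]
      have hne : (‖A x‖ : ℂ) ≠ 0 := by exact_mod_cast hAxn.ne'
      rw [map_inv₀, Complex.conj_ofReal, inner_self_eq_norm_sq_to_K]
      field_simp
      rfl
    rw [hprod] at hR
    have hbd : ‖(ContinuousLinearMap.adjoint A) y‖ * ‖(ContinuousLinearMap.adjoint B) y‖
        ≤ ‖A‖ * ‖B‖ := by
      have h1 : ‖(ContinuousLinearMap.adjoint A) y‖ ≤ ‖A‖ := by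
        calc ‖(ContinuousLinearMap.adjoint A) y‖
            ≤ ‖ContinuousLinearMap.adjoint A‖ * ‖y‖ := ContinuousLinearMap.le_opNorm _ _
          _ = ‖A‖ := by
              rw [hyn, LinearIsometryEquiv.norm_map ContinuousLinearMap.adjoint A]; ring
      have h2 : ‖(ContinuousLinearMap.adjoint B) y‖ ≤ ‖B‖ := by
        calc ‖(ContinuousLinearMap.adjoint B) y‖
            ≤ ‖ContinuousLinearMap.adjoint B‖ * ‖y‖ := ContinuousLinearMap.le_opNorm _ _
          _ = ‖B‖ := by
              rw [hyn, LinearIsometryEquiv.norm_map ContinuousLinearMap.adjoint B]; ring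
      exact mul_le_mul h1 h2 (norm_nonneg _) (norm_nonneg _)
    have hnum := le_numRad (B * star A) y hyn
    have htri : 2 * ‖(⟪B x, A x⟫ : ℂ)‖ - ‖(⟪(B * star A) y, y⟫ : ℂ)‖
        ≤ ‖(2 * ⟪B x, A x⟫ - ⟪(B * star A) y, y⟫ : ℂ)‖ := by
      have := norm_sub_norm_le (2 * ⟪B x, A x⟫ : ℂ) (⟪(B * star A) y, y⟫ : ℂ)
      simpa [norm_mul] using this
    rw [hAdj]
    linarith [le_trans hR hbd]

lemma numRad_split (A B : H →L[ℂ] H) :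
    numRad (star A * B) ≤ 1 / 2 * (‖A‖ * ‖B‖) + 1 / 2 * numRad (B * star A) := by
  refine numRad_le _ ?_ (key A B)
  have := numRad_nonneg (B * star A)
  positivity

lemma half_rpow {a b : ℝ} (ha : 0 ≤ a) (hb : 0 ≤ b) {p : ℝ} (hp : 1 ≤ p) :
    (1 / 2 * a + 1 / 2 * b) ^ p ≤ 1 / 2 * a ^ p + 1 / 2 * b ^ p := by
  lift a to NNReal using ha
  lift b to NNReal using hb
  have h := NNReal.rpow_arith_mean_le_arith_mean2_rpow (1/2) (1/2) a b (by rw [one_div, ← two_mul, mul_inv_cancel₀]; exact two_ne_zero) hp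
  have := (NNReal.coe_le_coe).mpr h
  push_cast at this
  convert this using 2 <;> norm_num

/-- Corollary: for `p ≥ 1`, `ω(A*B)^p ≤ (1/2)‖A‖^p ‖B‖^p + (1/2) ω(BA*)^p`. -/
theorem numRad_rpow_split (A B : H →L[ℂ] H) (p : ℝ) (hp : 1 ≤ p) :
    numRad (star A * B) ^ p
      ≤ (1 / 2) * (‖A‖ ^ p * ‖B‖ ^ p) + (1 / 2) * numRad (B * star A) ^ p := by
  have h0 : (0:ℝ) ≤ ‖A‖ * ‖B‖ := by positivity
  have h1 := numRad_nonneg (star A * B)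
  have h2 := numRad_nonneg (B * star A)
  have hp0 : (0:ℝ) ≤ p := le_trans zero_le_one hp
  calc numRad (star A * B) ^ p
      ≤ (1 / 2 * (‖A‖ * ‖B‖) + 1 / 2 * numRad (B * star A)) ^ p :=
        Real.rpow_le_rpow h1 (numRad_split A B) hp0
    _ ≤ 1 / 2 * (‖A‖ * ‖B‖) ^ p + 1 / 2 * numRad (B * star A) ^ p :=
        half_rpow h0 h2 hp
    _ = (1 / 2) * (‖A‖ ^ p * ‖B‖ ^ p) + (1 / 2) * numRad (B * star A) ^ p := by
        rw [Real.mul_rpow (norm_nonneg _) (norm_nonneg _)]
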